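/- Fix real numbers l, ε with l > ε. For each λ > 0, let κ(λ) be the unique κ ∈ (0, 1) satisfying ((l − ε)/λ)·κ + 2·Real.log κ = 0 (the optimal confidence of the CRUCIAL loss for the hard sample l). Then κ(λ) tends to 1 as λ → ∞. -/

import Mathlib

/-- For a hard sample `l > ε`, the optimal confidence `κ(λ)`, i.e. the unique
`κ ∈ (0, 1)` with `((l − ε)/λ)·κ + 2·log κ = 0`, tends to `1` as `λ → ∞`. -/
theorem crucial_confidence_limit (l ε : ℝ) (h : ε < l) (κ : ℝ → ℝ)
    (hκ : ∀ lam : ℝ, 0 < lam →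
      κ lam ∈ Set.Ioo (0 : ℝ) 1 ∧
        ((l - ε) / lam) * κ lam + 2 * Real.log (κ lam) = 0) :
    Filter.Tendsto κ Filter.atTop (nhds 1) := by
  have hlog : Filter.Tendsto (fun lam => Real.log (κ lam)) Filter.atTop (nhds 0) := by
    have hlo : Filter.Tendsto (fun lam : ℝ => -((l - ε) / (2 * lam))) Filter.atTop (nhds 0) := by
      have := (Filter.Tendsto.const_div_atTop (Filter.tendsto_atTop_atTop_of_monotone
        (fun a b hab => by linarith) (fun b => ⟨b / 2, by linarith⟩) :
        Filter.Tendsto (fun lam : ℝ => 2 * lam) Filter.atTop Filter.atTop) (l - ε))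
      simpa using this.neg
    refine tendsto_of_tendsto_of_tendsto_of_le_of_le' hlo tendsto_const_nhds ?_ ?_
    · filter_upwards [Filter.eventually_gt_atTop (0 : ℝ)] with lam hlam
      obtain ⟨⟨hκ0, hκ1⟩, heq⟩ := hκ lam hlam
      have hnn : 0 ≤ (l - ε) / lam := div_nonneg (by linarith) hlam.le
      have hle : (l - ε) / lam * κ lam ≤ (l - ε) / lam := by nlinarith
      have hlog' : Real.log (κ lam) = -((l - ε) / lam * κ lam) / 2 := by linarith
      have hre : (l - ε) / (2 * lam) = ((l - ε) / lam) / 2 := by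
        ring
      rw [hlog', hre]
      linarith
    · filter_upwards [Filter.eventually_gt_atTop (0 : ℝ)] with lam hlam
      obtain ⟨⟨hκ0, hκ1⟩, heq⟩ := hκ lam hlam
      exact (Real.log_nonpos hκ0.le hκ1.le)
  have hexp : Filter.Tendsto (fun lam => Real.exp (Real.log (κ lam))) Filter.atTop
      (nhds 1) := by
    simpa [Function.comp_def] using (Real.continuous_exp.tendsto 0).comp hlog
  refine hexp.congr' ?_
  filter_upwards [Filter.eventually_gt_atTop (0 : ℝ)] with lam hlam
  exact Real.exp_log (hκ lam hlam).1.1
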